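/- Let n ≥ 2 and m ≥ 1, and let H be the graph obtained from the join of the coclique on m vertices with the complete graph K_n, with a separate one-way infinite path attached at each coclique vertex. Then every clique vertex v of K_n is sedentary in the quantitative sense that for all real t, |⟨e_v, e^{−itA(H)} e_v⟩| ≥ 1 − 2/n. -/

import Mathlib

noncomputable section

/-- Vertices of the join of a coclique `\overline{K}_m` with the clique `K_n`, with a
separate one-way infinite path attached at each coclique vertex:
`Sum.inl k` is the clique vertex `v_{k}`, `Sum.inr (Sum.inl i)` is the coclique vertex
`c_{i}`, and `Sum.inr (Sum.inr (i, j))` is the tail vertex `q_{i, j+1}`. -/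
abbrev JoinTailV (n m : ℕ) := Fin n ⊕ (Fin m ⊕ (Fin m × ℕ))

/-- Adjacency in the graph `H`: the `v_k` are pairwise adjacent (forming `K_n`), each `c_i`
is adjacent to every `v_k`, and for each `i` the vertices `c_i, q_{i,1}, q_{i,2}, …`
form a one-way infinite path. -/
def joinTailAdj (n m : ℕ) (x y : JoinTailV n m) : Prop :=
  (∃ k k' : Fin n, k ≠ k' ∧ x = Sum.inl k ∧ y = Sum.inl k') ∨
  (∃ (k : Fin n) (i : Fin m),
    (x = Sum.inl k ∧ y = Sum.inr (Sum.inl i)) ∨ (y = Sum.inl k ∧ x = Sum.inr (Sum.inl i))) ∨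
  (∃ i : Fin m,
    (x = Sum.inr (Sum.inl i) ∧ y = Sum.inr (Sum.inr (i, 0))) ∨
    (y = Sum.inr (Sum.inl i) ∧ x = Sum.inr (Sum.inr (i, 0)))) ∨
  (∃ (i : Fin m) (j : ℕ),
    (x = Sum.inr (Sum.inr (i, j)) ∧ y = Sum.inr (Sum.inr (i, j + 1))) ∨
    (y = Sum.inr (Sum.inr (i, j)) ∧ x = Sum.inr (Sum.inr (i, j + 1))))

/-- The Hilbert space `ℓ²(V(H))`. -/
abbrev joinTailSpace (n m : ℕ) := lp (fun _ : JoinTailV n m => ℂ) 2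

/-- The standard orthonormal basis vector `e_w` of `ℓ²(V(H))`. -/
def stdVec {n m : ℕ} (w : JoinTailV n m) : joinTailSpace n m := lp.single 2 w 1

open scoped Classical

/-! ### Auxiliary lemmas -/

lemma ip_coord {n m : ℕ} (x : JoinTailV n m) (f : joinTailSpace n m) :
    (inner ℂ (stdVec x) f : ℂ) = f x := by
  rw [stdVec, lp.inner_single_left]
  simp [inner]

lemma ip_stdVec {n m : ℕ} (x y : JoinTailV n m) :
    (inner ℂ (stdVec x) (stdVec y) : ℂ) = if x = y then 1 else 0 := by
  rw [ip_coord, stdVec, lp.single_apply]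
  split_ifs with h h' h' <;> simp_all

lemma coord_ext {n m : ℕ} {f g : joinTailSpace n m}
    (h : ∀ x, (inner ℂ (stdVec x) f : ℂ) = inner ℂ (stdVec x) g) : f = g := by
  apply lp.ext; funext x; have := h x; rwa [ip_coord, ip_coord] at this

lemma exp_eigen {E : Type*} [NormedAddCommGroup E] [NormedSpace ℂ E] [CompleteSpace E]
    (B : E →L[ℂ] E) (v : E) (c : ℂ) (h : B v = c • v) :
    NormedSpace.exp B v = Complex.exp c • v := by
  have hp : ∀ p : ℕ, (B ^ p) v = c ^ p • v := by
    intro p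
    induction p with
    | zero => simp
    | succ p ih =>
      rw [pow_succ', pow_succ']
      simp [ContinuousLinearMap.mul_apply, ih, h, smul_smul, mul_comm]
  have hsummable := NormedSpace.expSeries_summable' (𝕂 := ℂ) B
  have hmap := (ContinuousLinearMap.apply ℂ E v).map_tsum hsummable
  rw [NormedSpace.exp_eq_tsum (𝕂 := ℂ)]
  rw [show (∑' (p : ℕ), (p.factorial⁻¹ : ℂ) • B ^ p) v
      = ContinuousLinearMap.apply ℂ E v (∑' (p : ℕ), (p.factorial⁻¹ : ℂ) • B ^ p) from rfl,
    hmap]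
  have hterm : ∀ p : ℕ, ContinuousLinearMap.apply ℂ E v ((p.factorial⁻¹ : ℂ) • B ^ p)
      = ((p.factorial⁻¹ : ℂ) * c ^ p) • v := by
    intro p; simp [hp p, smul_smul]
  rw [tsum_congr hterm, Summable.tsum_smul_const (L := SummationFilter.unconditional ℕ)]
  · congr 1
    rw [Complex.exp_eq_exp_ℂ, NormedSpace.exp_eq_tsum (𝕂 := ℂ)]
    exact tsum_congr fun p => (smul_eq_mul _ _).symm
  · have := NormedSpace.expSeries_summable' (𝕂 := ℂ) c
    simpa [smul_eq_mul] using this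

lemma adj_inl_inl {n m : ℕ} (j k : Fin n) :
    joinTailAdj n m (Sum.inl j) (Sum.inl k) ↔ j ≠ k := by
  simp [joinTailAdj]

lemma adj_c_inl {n m : ℕ} (i : Fin m) (k : Fin n) :
    joinTailAdj n m (Sum.inr (Sum.inl i)) (Sum.inl k) := by
  simp [joinTailAdj]

lemma adj_q_inl {n m : ℕ} (p : Fin m × ℕ) (k : Fin n) :
    ¬ joinTailAdj n m (Sum.inr (Sum.inr p)) (Sum.inl k) := by
  simp [joinTailAdj]

set_option maxHeartbeats 1000000 in
/-- Let `n ≥ 2` and `m ≥ 1`, and let `H` be the join of the coclique on `m` vertices with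
the clique `K_n`, with a separate one-way infinite path attached at each coclique vertex.
Every clique vertex `v` of `K_n` is sedentary: for all real `t`,
`|⟨e_v, e^{-itA(H)} e_v⟩| ≥ 1 - 2/n`. -/
theorem join_clique_sedentary (n m : ℕ) (hn : 2 ≤ n) (hm : 1 ≤ m)
    (A : joinTailSpace n m →L[ℂ] joinTailSpace n m) (hsa : IsSelfAdjoint A)
    (hA : ∀ x y : JoinTailV n m, (inner ℂ (stdVec x) (A (stdVec y)) : ℂ)
      = if joinTailAdj n m x y then 1 else 0)
    (k : Fin n) (t : ℝ) :
    1 - 2 / (n : ℝ)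
      ≤ ‖
          (inner ℂ (stdVec (Sum.inl k : JoinTailV n m))
            (NormedSpace.exp ((-(t : ℂ) * Complex.I) • A)
              (stdVec (Sum.inl k : JoinTailV n m))))‖ := by
  have hn0 : (n : ℂ) ≠ 0 := Nat.cast_ne_zero.2 (by omega)
  have hnR : (0 : ℝ) < (n : ℝ) := by exact_mod_cast Nat.pos_of_ne_zero (by omega)
  set c : ℂ := -(t : ℂ) * Complex.I with hc
  set B : joinTailSpace n m →L[ℂ] joinTailSpace n m := c • A with hB
  set U := NormedSpace.exp B with hU
  set e : joinTailSpace n m := stdVec (Sum.inl k) with he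
  set g : joinTailSpace n m := ∑ k' : Fin n, stdVec (Sum.inl k') with hg
  set s : joinTailSpace n m := (n : ℂ)⁻¹ • g with hs
  set w : joinTailSpace n m := e - s with hw
  -- coordinates of g
  have ipg : ∀ x : JoinTailV n m, (inner ℂ (stdVec x) g : ℂ)
      = ∑ k' : Fin n, if x = Sum.inl k' then 1 else 0 := by
    intro x
    rw [hg, inner_sum]
    exact Finset.sum_congr rfl fun k' _ => ip_stdVec x (Sum.inl k')
  have ipg_inl : ∀ j : Fin n, (inner ℂ (stdVec (Sum.inl j : JoinTailV n m)) g : ℂ) = 1 := by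
    intro j
    rw [ipg]
    simp [Sum.inl.injEq, Finset.sum_ite_eq]
  -- A w = -w
  have hAw : A w = (-1 : ℂ) • w := by
    apply coord_ext
    intro x
    have expand : (inner ℂ (stdVec x) (A w) : ℂ)
        = (if joinTailAdj n m x (Sum.inl k) then 1 else 0)
          - (n : ℂ)⁻¹ * ∑ k' : Fin n, (if joinTailAdj n m x (Sum.inl k') then (1:ℂ) else 0) := by
      rw [hw, hs, hg, map_sub, map_smul, inner_sub_right, inner_smul_right, map_sum, inner_sum]
      rw [he, hA]
      congr 1
      congr 1
      exact Finset.sum_congr rfl fun k' _ => hA x (Sum.inl k')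
    have expand2 : (inner ℂ (stdVec x) ((-1 : ℂ) • w) : ℂ)
        = -((if x = Sum.inl k then 1 else 0)
          - (n : ℂ)⁻¹ * ∑ k' : Fin n, (if x = Sum.inl k' then (1:ℂ) else 0)) := by
      rw [inner_smul_right, hw, hs, inner_sub_right, inner_smul_right, ipg, he, ip_stdVec]
      ring
    rw [expand, expand2]
    match x with
    | Sum.inl j =>
      have hsum1 : ∑ k' : Fin n,
          (if joinTailAdj n m (Sum.inl j) (Sum.inl k') then (1:ℂ) else 0)
          = (n : ℂ) - 1 := by
        have : ∀ k' : Fin n, (if joinTailAdj n m (Sum.inl j) (Sum.inl k') then (1:ℂ) else 0)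
            = 1 - (if j = k' then (1:ℂ) else 0) := by
          intro k'
          rw [if_congr (adj_inl_inl j k') rfl rfl]
          by_cases h : j = k' <;> simp [h]
        rw [Finset.sum_congr rfl fun k' _ => this k', Finset.sum_sub_distrib]
        simp [Finset.sum_ite_eq]
      have hsum2 : ∑ k' : Fin n, (if (Sum.inl j : JoinTailV n m) = Sum.inl k'
          then (1:ℂ) else 0) = 1 := by
        simp [Sum.inl.injEq, Finset.sum_ite_eq]
      rw [hsum1, hsum2, if_congr (adj_inl_inl j k) rfl rfl]
      by_cases h : j = k
      · simp only [h, ne_eq, not_true_eq_false, if_false, Sum.inl.injEq, if_pos rfl]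
        field_simp
        simp only [↓reduceIte]
        ring
      · simp only [ne_eq, h, not_false_eq_true, if_true, Sum.inl.injEq, if_neg h]
        field_simp
        simp only [↓reduceIte]
        ring
    | Sum.inr (Sum.inl i) =>
      have hsum1 : ∑ k' : Fin n,
          (if joinTailAdj n m (Sum.inr (Sum.inl i)) (Sum.inl k') then (1:ℂ) else 0)
          = (n : ℂ) := by
        simp [adj_c_inl]
      have hsum2 : ∑ k' : Fin n, (if (Sum.inr (Sum.inl i) : JoinTailV n m) = Sum.inl k'
          then (1:ℂ) else 0) = 0 := by simp
      rw [hsum1, hsum2, if_pos (adj_c_inl i k)]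
      simp only [reduceCtorEq, if_false]
      field_simp
      ring
    | Sum.inr (Sum.inr p) =>
      have hsum1 : ∑ k' : Fin n,
          (if joinTailAdj n m (Sum.inr (Sum.inr p)) (Sum.inl k') then (1:ℂ) else 0)
          = 0 := by simp [adj_q_inl]
      have hsum2 : ∑ k' : Fin n, (if (Sum.inr (Sum.inr p) : JoinTailV n m) = Sum.inl k'
          then (1:ℂ) else 0) = 0 := by simp
      rw [hsum1, hsum2, if_neg (adj_q_inl p k)]
      simp
  -- eigenvector facts
  have hBw : B w = (-c) • w := by
    rw [hB, ContinuousLinearMap.smul_apply, hAw, smul_smul, neg_smul, ← neg_smul]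
    ring_nf
  have hUw : U w = Complex.exp (-c) • w := exp_eigen B w (-c) hBw
  -- adjoint facts
  have hstarc : star c = -c := by
    rw [hc]
    simp [Complex.star_def, map_mul, Complex.conj_I, Complex.conj_ofReal]
  have hstarB : star B = -B := by
    rw [hB, star_smul, hsa.star_eq, hstarc, neg_smul]
  have hstarU : star U = NormedSpace.exp (-B) := by
    rw [hU, NormedSpace.star_exp, hstarB]
  have hUnit : star U * U = 1 := by
    rw [hstarU, hU, ← NormedSpace.exp_add_of_commute_of_mem_ball (𝕂 := ℂ) (Commute.neg_left (Commute.refl B))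
        ((NormedSpace.expSeries_radius_eq_top ℂ (joinTailSpace n m →L[ℂ] joinTailSpace n m)).symm ▸ edist_lt_top _ _)
        ((NormedSpace.expSeries_radius_eq_top ℂ (joinTailSpace n m →L[ℂ] joinTailSpace n m)).symm ▸ edist_lt_top _ _),
      neg_add_cancel, NormedSpace.exp_zero]
  have hadjU : ∀ x : joinTailSpace n m, ContinuousLinearMap.adjoint U (U x) = x := by
    intro x
    rw [← ContinuousLinearMap.star_eq_adjoint]
    have := congrArg (fun T : joinTailSpace n m →L[ℂ] joinTailSpace n m => T x) hUnit
    simpa [ContinuousLinearMap.mul_apply] using this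
  have hUs_norm : ‖U s‖ = ‖s‖ := by
    have h1 : (inner ℂ (U s) (U s) : ℂ) = inner ℂ s s := by
      rw [← ContinuousLinearMap.adjoint_inner_left U s (U s), hadjU]
    have h3 : ‖U s‖ ^ 2 = ‖s‖ ^ 2 := by
      rw [@norm_sq_eq_re_inner ℂ, @norm_sq_eq_re_inner ℂ, h1]
    nlinarith [norm_nonneg (U s), norm_nonneg s, sq_nonneg (‖U s‖ - ‖s‖), sq_nonneg (‖U s‖ + ‖s‖)]
  -- inner product values
  have hipw : ∀ j : Fin n, (inner ℂ (stdVec (Sum.inl j : JoinTailV n m)) w : ℂ)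
      = (if j = k then 1 else 0) - (n : ℂ)⁻¹ := by
    intro j
    rw [hw, inner_sub_right, hs, inner_smul_right, ipg_inl, he, ip_stdVec]
    simp [Sum.inl.injEq]
  have hsw : (inner ℂ s w : ℂ) = 0 := by
    rw [hs, inner_smul_left, hg, sum_inner]
    rw [Finset.sum_congr rfl fun j _ => hipw j, Finset.sum_sub_distrib]
    simp [Finset.sum_ite_eq', mul_comm, Finset.card_univ, hn0]
  have hws : (inner ℂ w s : ℂ) = 0 := by
    rw [← inner_conj_symm, hsw, map_zero]
  have hew : (inner ℂ e w : ℂ) = 1 - (n : ℂ)⁻¹ := by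
    have := hipw k
    rw [he, this, if_pos rfl]
  have hss : (inner ℂ s s : ℂ) = (n : ℂ)⁻¹ := by
    rw [hs, inner_smul_left, inner_smul_right, hg, sum_inner]
    rw [Finset.sum_congr rfl fun j _ => ipg_inl j]
    simp only [Finset.sum_const, Finset.card_univ, Fintype.card_fin, nsmul_eq_mul, mul_one]
    rw [map_inv₀, Complex.conj_natCast]
    field_simp
  have hnorm_s : ‖s‖ * ‖s‖ = (n : ℝ)⁻¹ := by
    have h2 : ‖s‖ ^ 2 = (n : ℝ)⁻¹ := by
      rw [@norm_sq_eq_re_inner ℂ, hss]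
      have : (n : ℂ)⁻¹ = (((n : ℝ)⁻¹ : ℝ) : ℂ) := by push_cast; ring
      rw [this]
      simp
    rw [← h2]; ring
  -- w inner U s = 0
  have hwUs : (inner ℂ w (U s) : ℂ) = 0 := by
    have hadjw : ContinuousLinearMap.adjoint U w = Complex.exp c • w := by
      rw [← ContinuousLinearMap.star_eq_adjoint, hstarU]
      have hBw' : (-B) w = c • w := by rw [ContinuousLinearMap.neg_apply, hBw]; simp
      exact exp_eigen (-B) w c hBw'
    rw [← ContinuousLinearMap.adjoint_inner_left U s w, hadjw, inner_smul_left, hws, mul_zero]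
  -- main decomposition
  have hesum : e = w + s := by rw [hw, sub_add_cancel]
  have hmain : (inner ℂ e (U e) : ℂ)
      = Complex.exp (-c) * (1 - (n : ℂ)⁻¹) + inner ℂ s (U s) := by
    conv_lhs => rw [hesum]
    rw [map_add, inner_add_right, hUw, inner_smul_right, ← hesum, hew]
    rw [hesum, inner_add_left, hwUs, zero_add]
  -- bounds
  have habs1 : ‖(Complex.exp (-c) * (1 - (n : ℂ)⁻¹))‖ = 1 - (n : ℝ)⁻¹ := by
    rw [norm_mul, Complex.norm_exp]
    have hre : (-c).re = 0 := by rw [hc]; simp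
    rw [hre, Real.exp_zero, one_mul]
    have : (1 - (n : ℂ)⁻¹) = ((1 - (n : ℝ)⁻¹ : ℝ) : ℂ) := by push_cast; ring
    rw [this, Complex.norm_real, Real.norm_eq_abs, abs_of_nonneg]
    have : (n : ℝ)⁻¹ ≤ 1 := by
      rw [inv_le_one_iff₀]; right; exact_mod_cast Nat.one_le_iff_ne_zero.2 (by omega)
    linarith
  have habs2 : ‖(inner ℂ s (U s))‖ ≤ (n : ℝ)⁻¹ := by
    calc ‖(inner ℂ s (U s))‖ = ‖(inner ℂ s (U s) : ℂ)‖ := rfl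
      _ ≤ ‖s‖ * ‖U s‖ := norm_inner_le_norm s (U s)
      _ = (n : ℝ)⁻¹ := by rw [hUs_norm, hnorm_s]
  have hlower : 1 - (n : ℝ)⁻¹ - (n : ℝ)⁻¹ ≤ ‖(inner ℂ e (U e))‖ := by
    rw [hmain]
    have h4 : ‖(Complex.exp (-c) * (1 - (n : ℂ)⁻¹))‖
        ≤ ‖(Complex.exp (-c) * (1 - (n : ℂ)⁻¹) + inner ℂ s (U s))‖
          + ‖(inner ℂ s (U s))‖ := by
      calc ‖(Complex.exp (-c) * (1 - (n : ℂ)⁻¹))‖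
          = ‖((Complex.exp (-c) * (1 - (n : ℂ)⁻¹) + inner ℂ s (U s))
            + (- inner ℂ s (U s)))‖ := by ring_nf
        _ ≤ _ := by
            have := norm_add_le
              (Complex.exp (-c) * (1 - (n : ℂ)⁻¹) + inner ℂ s (U s)) (- inner ℂ s (U s))
            simpa using this
    rw [habs1] at h4
    linarith
  have hfinal : (1 : ℝ) - 2 / (n : ℝ) = 1 - (n : ℝ)⁻¹ - (n : ℝ)⁻¹ := by
    field_simp; ring
  rw [hfinal]
  calc (1 : ℝ) - (n : ℝ)⁻¹ - (n : ℝ)⁻¹ ≤ ‖(inner ℂ e (U e))‖ := hlower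
    _ = _ := by rw [he, hU, hB, hc]
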